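/- For n, m ≥ 2, mbt(K_{2n+1} □ C_{2m}) = 2n + 3 = Δ(K_{2n+1} □ C_{2m}) + 1. -/

import Mathlib

open SimpleGraph
open scoped Classical

/-- A matching book embedding of `G` in `k` pages: a linear order (spine) on the
vertices together with a page assignment for the edges such that each page is a
matching (every vertex has degree at most one per page) and edges on the same
page do not cross with respect to the spine order. -/
structure MatchingBookEmbedding {V : Type*} [Fintype V] (G : SimpleGraph V) (k : ℕ) where
  ord : V ≃ Fin (Fintype.card V)
  page : G.edgeSet → Fin k
  matching : ∀ e f : G.edgeSet, e ≠ f → page e = page f →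
    ∀ v : V, v ∈ (e : Sym2 V) → v ∉ (f : Sym2 V)
  noncross : ∀ e f : G.edgeSet, page e = page f →
    ∀ a b c d : V, (e : Sym2 V) = s(a, b) → (f : Sym2 V) = s(c, d) →
      ord a < ord c → ord c < ord b → ord b < ord d → False

/-- The matching book thickness: the minimum number of pages over all matching
book embeddings. -/
noncomputable def mbt {V : Type*} [Fintype V] (G : SimpleGraph V) : ℕ :=
  sInf {k | Nonempty (MatchingBookEmbedding G k)}

namespace MBTAux


/-- reversal-aware within-block coordinate -/
def sig (n i v : ℕ) : ℕ := if i % 2 = 0 then v else 2 * n - v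

lemma sig_le (n i v : ℕ) : sig n i v ≤ max v (2 * n) := by
  unfold sig; split <;> omega

lemma sig_le' (n i v : ℕ) (hv : v ≤ 2 * n) : sig n i v ≤ 2 * n := by
  unfold sig; split <;> omega

lemma sig_succ (n i v : ℕ) (hv : v ≤ 2 * n) : sig n (i + 1) v = 2 * n - sig n i v := by
  rcases Nat.mod_two_eq_zero_or_one i with h | h <;>
    simp [sig, Nat.add_mod, h] <;> omega

lemma sig_inj (n i v w : ℕ) (hv : v ≤ 2 * n) (hw : w ≤ 2 * n) (h : sig n i v = sig n i w) :
    v = w := by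
  unfold sig at h; split at h <;> omega

lemma sig_even {i : ℕ} (h : i % 2 = 0) (n v : ℕ) : sig n i v = v := by
  unfold sig; rw [if_pos h]

lemma sig_odd {i : ℕ} (h : i % 2 = 1) (n v : ℕ) : sig n i v = 2 * n - v := by
  unfold sig; rw [if_neg (by omega)]

def posFun (n m : ℕ) (x : Fin (2*n+1) × Fin (2*m)) : ℕ :=
  x.2.val * (2*n+1) + sig n x.2.val x.1.val

lemma posFun_def (n m : ℕ) (x : Fin (2*n+1) × Fin (2*m)) :
    posFun n m x = x.2.val * (2*n+1) + sig n x.2.val x.1.val := rfl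

lemma block_mono {n m : ℕ} (x y : Fin (2*n+1) × Fin (2*m)) (h : x.2.val < y.2.val) :
    posFun n m x < posFun n m y := by
  have hsx := sig_le' n x.2.val x.1.val (by have := x.1.isLt; omega)
  have h2 : (x.2.val + 1) * (2*n+1) ≤ y.2.val * (2*n+1) :=
    Nat.mul_le_mul_right _ h
  have e1 : (x.2.val+1)*(2*n+1) = x.2.val*(2*n+1) + (2*n+1) := by ring
  rw [e1] at h2
  have h3 := Nat.zero_le (sig n y.2.val y.1.val)
  rw [posFun_def, posFun_def]
  set A := x.2.val * (2*n+1)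
  set B := y.2.val * (2*n+1)
  omega

lemma block_le_of_pos_lt {n m : ℕ} (x y : Fin (2*n+1) × Fin (2*m))
    (h : posFun n m x < posFun n m y) : x.2.val ≤ y.2.val := by
  by_contra hc
  push_neg at hc
  have := block_mono y x hc
  omega

lemma posFun_inj {n m : ℕ} : Function.Injective (posFun n m) := by
  intro x y h
  have hb : x.2.val = y.2.val := by
    rcases lt_trichotomy x.2.val y.2.val with hl | he | hl
    · have := block_mono x y hl; omega
    · exact he
    · have := block_mono y x hl; omega
  rw [posFun_def, posFun_def, hb] at h
  have hs : sig n y.2.val x.1.val = sig n y.2.val y.1.val := by omega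
  have h1 : x.1.val = y.1.val :=
    sig_inj n _ _ _ (by have := x.1.isLt; omega) (by have := y.1.isLt; omega) hs
  ext
  · exact h1
  · exact hb

lemma posFun_lt {n m : ℕ} (x : Fin (2*n+1) × Fin (2*m)) :
    posFun n m x < (2*n+1) * (2*m) := by
  have h2 : (x.2.val + 1) * (2*n+1) ≤ (2*m) * (2*n+1) :=
    Nat.mul_le_mul_right _ x.2.isLt
  have e1 : (x.2.val+1)*(2*n+1) = x.2.val*(2*n+1) + (2*n+1) := by ring
  have e2 : (2*m)*(2*n+1) = (2*n+1)*(2*m) := by ring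
  rw [e1, e2] at h2
  have hsx := sig_le' n x.2.val x.1.val (by have := x.1.isLt; omega)
  rw [posFun_def]
  set A := x.2.val * (2*n+1)
  set C := (2*n+1)*(2*m)
  omega

lemma posFun_lt_card {n m : ℕ} (x : Fin (2*n+1) × Fin (2*m)) :
    posFun n m x < Fintype.card (Fin (2*n+1) × Fin (2*m)) := by
  simpa using posFun_lt x

noncomputable def spine (n m : ℕ) :
    (Fin (2*n+1) × Fin (2*m)) ≃ Fin (Fintype.card (Fin (2*n+1) × Fin (2*m))) :=
  Equiv.ofBijective (fun x => ⟨posFun n m x, posFun_lt_card x⟩)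
    ((Fintype.bijective_iff_injective_and_card _).2
      ⟨fun x y h => posFun_inj (congrArg Fin.val h), by simp⟩)

lemma spine_val {n m : ℕ} (x : Fin (2*n+1) × Fin (2*m)) :
    (spine n m x).val = posFun n m x := rfl



def cbit (m a b : ℕ) : ℕ :=
  if min a b = 0 ∧ max a b = 2*m-1 then 1 else min a b % 2

lemma cbit_le (m a b : ℕ) : cbit m a b ≤ 1 := by
  unfold cbit; split <;> omega

lemma cbit_comm (m a b : ℕ) : cbit m a b = cbit m b a := by
  unfold cbit; rw [Nat.min_comm, Nat.max_comm]

lemma cbit_val (m a b : ℕ) :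
    (cbit m a b = 1 ∧ min a b = 0 ∧ max a b = 2*m-1) ∨
    (cbit m a b = min a b % 2 ∧ ¬(min a b = 0 ∧ max a b = 2*m-1)) := by
  unfold cbit; split <;> simp_all

/-- characterization of cycle adjacency at the `val` level -/
lemma cyc_adj_iff {m : ℕ} (hm : 1 ≤ m) (u v : Fin (2*m)) :
    (cycleGraph (2*m)).Adj u v ↔
      (v.val = u.val + 1 ∨ u.val = v.val + 1 ∨ (u.val = 0 ∧ v.val = 2*m-1) ∨
        (v.val = 0 ∧ u.val = 2*m-1)) := by
  have key : ∀ x y : Fin (2*m),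
      ((x - y).val = 1 ↔ (x.val = y.val + 1 ∨ (x.val = 0 ∧ y.val = 2*m-1))) := by
    intro x y
    rw [Fin.sub_def]
    simp only
    have hx := x.isLt
    have hy := y.isLt
    rcases Nat.lt_or_ge (2*m - y.val + x.val) (2*m) with h | h
    · rw [Nat.mod_eq_of_lt h]; omega
    · rw [Nat.mod_eq_sub_mod h, Nat.mod_eq_of_lt (by omega)]; omega
  rw [cycleGraph_adj', key, key]
  omega

def pageFun (n m : ℕ) (x y : Fin (2*n+1) × Fin (2*m)) : Fin (2*n+3) :=
  if x.2 = y.2 then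
    ⟨(x.1.val + y.1.val) % (2*n+1), by have := Nat.mod_lt (x.1.val + y.1.val) (y := 2*n+1) (by omega); omega⟩
  else ⟨2*n+1 + cbit m x.2.val y.2.val, by have := cbit_le m x.2.val y.2.val; omega⟩

lemma pageFun_comm (n m : ℕ) (x y : Fin (2*n+1) × Fin (2*m)) :
    pageFun n m x y = pageFun n m y x := by
  unfold pageFun
  rcases eq_or_ne x.2 y.2 with h | h
  · rw [if_pos h, if_pos h.symm]
    exact Fin.ext (by simp [Nat.add_comm])
  · rw [if_neg h, if_neg (Ne.symm h)]
    congr 1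
    rw [cbit_comm]

def Gr (n m : ℕ) : SimpleGraph (Fin (2*n+1) × Fin (2*m)) :=
  (⊤ : SimpleGraph (Fin (2*n+1))) □ cycleGraph (2*m)

noncomputable def pg (n m : ℕ) (e : (Gr n m).edgeSet) : Fin (2*n+3) :=
  Sym2.lift ⟨pageFun n m, pageFun_comm n m⟩ e.val

lemma pg_eq (n m : ℕ) (e : (Gr n m).edgeSet) (x y : Fin (2*n+1) × Fin (2*m))
    (h : e.val = s(x, y)) : pg n m e = pageFun n m x y := by
  unfold pg; rw [h]; rfl

/-- decomposition of an edge of the product graph -/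
lemma adj_cases {n m : ℕ} {x y : Fin (2*n+1) × Fin (2*m)} (h : (Gr n m).Adj x y) :
    (x.2 = y.2 ∧ x.1 ≠ y.1) ∨ (x.1 = y.1 ∧ (cycleGraph (2*m)).Adj x.2 y.2) := by
  rcases (boxProd_adj).mp h with ⟨h1, h2⟩ | ⟨h1, h2⟩
  · exact Or.inl ⟨h2, (top_adj _ _).mp h1⟩
  · exact Or.inr ⟨h2, h1⟩



lemma L1 (N x1 y1 x2 y2 : ℕ) (hy2 : y2 < N) (o1 : x1 < y1) (o2 : y1 < x2)
    (o3 : x2 < y2) (h : (x1+x2) % N = (y1+y2) % N) : False := by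
  have d1 := Nat.div_add_mod (x1+x2) N
  have d2 := Nat.div_add_mod (y1+y2) N
  have q1 : (x1+x2)/N < 2 := Nat.div_lt_of_lt_mul (by omega)
  have q2 : (y1+y2)/N < 2 := Nat.div_lt_of_lt_mul (by omega)
  have e1 : (x1+x2)/N = 0 ∨ (x1+x2)/N = 1 := by interval_cases h' : (x1+x2)/N <;> simp
  have e2 : (y1+y2)/N = 0 ∨ (y1+y2)/N = 1 := by interval_cases h' : (y1+y2)/N <;> simp
  rcases e1 with e1|e1 <;> rcases e2 with e2|e2 <;>
    rw [e1] at d1 <;> rw [e2] at d2 <;> simp at d1 d2 <;> omega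

lemma construction (n m : ℕ) (hn : 2 ≤ n) (hm : 2 ≤ m) :
    Nonempty (MatchingBookEmbedding (Gr n m) (2*n+3)) := by
  refine ⟨⟨spine n m, pg n m, ?_, ?_⟩⟩
  · -- matching
    intro e f hef hpage v hve hvf
    obtain ⟨a, ha⟩ := Sym2.mem_iff_exists.mp hve
    obtain ⟨b, hb⟩ := Sym2.mem_iff_exists.mp hvf
    have hadj_e : (Gr n m).Adj v a := (Gr n m).mem_edgeSet.mp (ha ▸ e.prop)
    have hadj_f : (Gr n m).Adj v b := (Gr n m).mem_edgeSet.mp (hb ▸ f.prop)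
    have hab : a ≠ b := by
      intro h
      exact hef (Subtype.ext (by rw [ha, hb, h]))
    have hpe : pageFun n m v a = pageFun n m v b := by
      rw [← pg_eq n m e v a ha, ← pg_eq n m f v b hb]; exact hpage
    rcases adj_cases hadj_e with ⟨he2, he1⟩ | ⟨he1, he2⟩ <;>
      rcases adj_cases hadj_f with ⟨hf2, hf1⟩ | ⟨hf1, hf2⟩
    · -- both K edges
      unfold pageFun at hpe
      rw [if_pos he2, if_pos hf2] at hpe
      have hval := congrArg Fin.val hpe
      simp only at hval
      have hmeq : a.1.val ≡ b.1.val [MOD 2*n+1] :=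
        Nat.ModEq.add_left_cancel' v.1.val hval
      have h1 : a.1.val = b.1.val := by
        have := hmeq
        unfold Nat.ModEq at this
        rw [Nat.mod_eq_of_lt a.1.isLt, Nat.mod_eq_of_lt b.1.isLt] at this
        exact this
      exact hab (Prod.ext (Fin.ext h1) (he2 ▸ hf2 ▸ rfl))
    · -- K edge vs cycle edge
      have hne : v.2 ≠ b.2 := hf2.ne
      unfold pageFun at hpe
      rw [if_pos he2, if_neg hne] at hpe
      have hval := congrArg Fin.val hpe
      simp only at hval
      have := Nat.mod_lt (v.1.val + a.1.val) (y := 2*n+1) (by omega)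
      omega
    · -- cycle edge vs K edge
      have hne : v.2 ≠ a.2 := he2.ne
      unfold pageFun at hpe
      rw [if_neg hne, if_pos hf2] at hpe
      have hval := congrArg Fin.val hpe
      simp only at hval
      have := Nat.mod_lt (v.1.val + b.1.val) (y := 2*n+1) (by omega)
      omega
    · -- both cycle edges
      have hnea : v.2 ≠ a.2 := he2.ne
      have hneb : v.2 ≠ b.2 := hf2.ne
      have hne2 : a.2.val ≠ b.2.val := by
        intro h
        exact hab (Prod.ext (he1 ▸ hf1 ▸ rfl) (Fin.ext h))
      unfold pageFun at hpe
      rw [if_neg hnea, if_neg hneb] at hpe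
      have hval := congrArg Fin.val hpe
      simp only at hval
      have hA := (cyc_adj_iff (by omega) v.2 a.2).mp he2
      have hB := (cyc_adj_iff (by omega) v.2 b.2).mp hf2
      have c1 := cbit_val m v.2.val a.2.val
      have c2 := cbit_val m v.2.val b.2.val
      have := v.2.isLt
      have := a.2.isLt
      have := b.2.isLt
      omega
  · -- noncross
    intro e f hpage a b c d he hf h1 h2 h3
    have hadj_e : (Gr n m).Adj a b := (Gr n m).mem_edgeSet.mp (he ▸ e.prop)
    have hadj_f : (Gr n m).Adj c d := (Gr n m).mem_edgeSet.mp (hf ▸ f.prop)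
    have hpe : pageFun n m a b = pageFun n m c d := by
      rw [← pg_eq n m e a b he, ← pg_eq n m f c d hf]; exact hpage
    have P1 : posFun n m a < posFun n m c := h1
    have P2 : posFun n m c < posFun n m b := h2
    have P3 : posFun n m b < posFun n m d := h3
    have ha1 := a.1.isLt
    have hb1 := b.1.isLt
    have hc1 := c.1.isLt
    have hd1 := d.1.isLt
    have ha2 := a.2.isLt
    have hb2 := b.2.isLt
    have hc2 := c.2.isLt
    have hd2 := d.2.isLt
    rcases adj_cases hadj_e with ⟨he2, he1⟩ | ⟨he1, he2⟩ <;>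
      rcases adj_cases hadj_f with ⟨hf2, hf1⟩ | ⟨hf1, hf2⟩
    · -- both K edges
      have hac := block_le_of_pos_lt _ _ P1
      have hcb := block_le_of_pos_lt _ _ P2
      have hbd := block_le_of_pos_lt _ _ P3
      have hblock : c.2.val = a.2.val := by
        have := congrArg Fin.val he2
        have := congrArg Fin.val hf2
        omega
      have hblockd : d.2.val = a.2.val := by
        have := congrArg Fin.val hf2
        omega
      have hblockb : b.2.val = a.2.val := by
        have := congrArg Fin.val he2
        omega
      unfold pageFun at hpe
      rw [if_pos he2, if_pos hf2] at hpe
      have hsum := congrArg Fin.val hpe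
      simp only at hsum
      rw [posFun_def, posFun_def] at P1 P2 P3
      simp only [hblock, hblockd, hblockb] at P1 P2 P3
      set A := a.2.val * (2*n+1) with hA
      rcases Nat.mod_two_eq_zero_or_one a.2.val with hpar | hpar
      · simp only [sig_even hpar] at P1 P2 P3
        exact L1 (2*n+1) a.1.val c.1.val b.1.val d.1.val (by omega)
          (by omega) (by omega) (by omega) hsum
      · simp only [sig_odd hpar] at P1 P2 P3
        exact L1 (2*n+1) d.1.val b.1.val c.1.val a.1.val (by omega)
          (by omega) (by omega) (by omega)
          (by rw [Nat.add_comm d.1.val c.1.val, Nat.add_comm b.1.val a.1.val]; exact hsum.symm)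
    · -- K vs cycle : page values differ
      have hne : c.2 ≠ d.2 := hf2.ne
      unfold pageFun at hpe
      rw [if_pos he2, if_neg hne] at hpe
      have hval := congrArg Fin.val hpe
      simp only at hval
      have := Nat.mod_lt (a.1.val + b.1.val) (y := 2*n+1) (by omega)
      omega
    · -- cycle vs K
      have hne : a.2 ≠ b.2 := he2.ne
      unfold pageFun at hpe
      rw [if_neg hne, if_pos hf2] at hpe
      have hval := congrArg Fin.val hpe
      simp only at hval
      have := Nat.mod_lt (c.1.val + d.1.val) (y := 2*n+1) (by omega)
      omega
    · -- both cycle edges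
      have hnea : a.2 ≠ b.2 := he2.ne
      have hnec : c.2 ≠ d.2 := hf2.ne
      unfold pageFun at hpe
      rw [if_neg hnea, if_neg hnec] at hpe
      have hbit : cbit m a.2.val b.2.val = cbit m c.2.val d.2.val := by
        have hval := congrArg Fin.val hpe
        simp only at hval
        omega
      have hab2 : a.2.val < b.2.val := by
        have h := block_le_of_pos_lt _ _ (P1.trans P2)
        have : a.2.val ≠ b.2.val := fun hh => hnea (Fin.ext hh)
        omega
      have hcd2 : c.2.val < d.2.val := by
        have h := block_le_of_pos_lt _ _ (P2.trans P3)
        have : c.2.val ≠ d.2.val := fun hh => hnec (Fin.ext hh)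
        omega
      have hcase_e : b.2.val = a.2.val + 1 ∨ (a.2.val = 0 ∧ b.2.val = 2*m-1) := by
        have := (cyc_adj_iff (by omega) a.2 b.2).mp he2
        omega
      have hcase_f : d.2.val = c.2.val + 1 ∨ (c.2.val = 0 ∧ d.2.val = 2*m-1) := by
        have := (cyc_adj_iff (by omega) c.2 d.2).mp hf2
        omega
      have cbe := cbit_val m a.2.val b.2.val
      have cbf := cbit_val m c.2.val d.2.val
      rcases hcase_e with hE | hE <;> rcases hcase_f with hF | hF
      · -- normal-normal
        have hpar : a.2.val % 2 = c.2.val % 2 := by omega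
        rcases eq_or_ne a.2.val c.2.val with hts | hts
        · -- same block pair
          have hsa := sig_le' n a.2.val a.1.val (by omega)
          have hsc := sig_le' n c.2.val c.1.val (by omega)
          have Ea : posFun n m a = a.2.val * (2*n+1) + sig n a.2.val a.1.val := rfl
          have Eb : posFun n m b = (a.2.val + 1) * (2*n+1) + (2*n - sig n a.2.val a.1.val) := by
            rw [posFun_def, hE, ← he1, sig_succ n a.2.val a.1.val (by omega)]
          have Ec : posFun n m c = a.2.val * (2*n+1) + sig n c.2.val c.1.val := by
            rw [posFun_def, ← hts]
          have Ed : posFun n m d = (a.2.val + 1) * (2*n+1) + (2*n - sig n c.2.val c.1.val) := by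
            rw [posFun_def, hF, ← hf1, ← hts, hts, sig_succ n c.2.val c.1.val (by omega)]
          have e1 : (a.2.val+1)*(2*n+1) = a.2.val*(2*n+1) + (2*n+1) := by ring
          rw [e1] at Eb Ed
          set A := a.2.val * (2*n+1)
          omega
        · rcases (by omega : a.2.val + 2 ≤ c.2.val ∨ c.2.val + 2 ≤ a.2.val) with hlt | hlt
          · have : posFun n m b < posFun n m c := block_mono _ _ (by omega)
            omega
          · have : posFun n m d < posFun n m a := block_mono _ _ (by omega)
            omega
      · -- normal-wrap
        have : posFun n m c < posFun n m a := block_mono _ _ (by omega)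
        omega
      · -- wrap-normal
        have : posFun n m d < posFun n m b := block_mono _ _ (by omega)
        omega
      · -- wrap-wrap
        have hodd : ¬ ((2*m-1) % 2 = 0) := by omega
        have Ea : posFun n m a = a.1.val := by
          rw [posFun_def, hE.1]; simp [sig]
        have Ec : posFun n m c = c.1.val := by
          rw [posFun_def, hF.1]; simp [sig]
        have Eb : posFun n m b = (2*m-1) * (2*n+1) + (2*n - a.1.val) := by
          rw [posFun_def, hE.2, ← he1]
          unfold sig
          rw [if_neg hodd]
        have Ed : posFun n m d = (2*m-1) * (2*n+1) + (2*n - c.1.val) := by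
          rw [posFun_def, hF.2, ← hf1]
          unfold sig
          rw [if_neg hodd]
        set B := (2*m-1) * (2*n+1)
        omega



lemma even_card_of_involution {α : Type*} [DecidableEq α] (S : Finset α) (g : α → α)
    (hmem : ∀ a ∈ S, g a ∈ S) (hinv : ∀ a ∈ S, g (g a) = a) (hne : ∀ a ∈ S, g a ≠ a) :
    Even S.card := by
  induction S using Finset.strongInduction with
  | _ S ih =>
    rcases S.eq_empty_or_nonempty with rfl | ⟨a, ha⟩
    · simp
    · have hga := hmem a ha
      have hsub : {a, g a} ⊆ S := by
        intro x hx
        simp only [Finset.mem_insert, Finset.mem_singleton] at hx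
        rcases hx with rfl | rfl
        · exact ha
        · exact hga
      have hpair : ({a, g a} : Finset α).card = 2 := Finset.card_pair (Ne.symm (hne a ha))
      have hss : S \ {a, g a} ⊂ S := by
        apply Finset.sdiff_ssubset hsub
        simp
      have heven : Even (S \ {a, g a}).card := by
        refine ih _ hss ?_ ?_ ?_
        · intro x hx
          simp only [Finset.mem_sdiff, Finset.mem_insert, Finset.mem_singleton] at hx ⊢
          obtain ⟨hxS, hxn⟩ := hx
          refine ⟨hmem x hxS, fun h => ?_⟩
          rcases h with h | h
          · exact hxn (Or.inr (by rw [← h, hinv x hxS]))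
          · have h2 := congrArg g h
            rw [hinv x hxS, hinv a ha] at h2
            exact hxn (Or.inl h2)
        · intro x hx
          exact hinv x (Finset.mem_sdiff.mp hx).1
        · intro x hx
          exact hne x (Finset.mem_sdiff.mp hx).1
      have hcard : (S \ {a, g a}).card = S.card - 2 := by
        rw [Finset.card_sdiff_of_subset hsub, hpair]
      have h2 : 2 ≤ S.card := by
        calc 2 = ({a, g a} : Finset α).card := hpair.symm
        _ ≤ S.card := Finset.card_le_card hsub
      obtain ⟨c, hc⟩ := heven
      exact ⟨c + 1, by omega⟩

lemma cyc_deg {m : ℕ} (hm : 2 ≤ m) (v : Fin (2*m)) : (cycleGraph (2*m)).degree v = 2 := by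
  have key : ∀ u v : Fin (2*m), (cycleGraph (2*m)).Adj u v ↔
      (v.val = u.val + 1 ∨ u.val = v.val + 1 ∨ (u.val = 0 ∧ v.val = 2*m-1) ∨
        (v.val = 0 ∧ u.val = 2*m-1)) := by
    intro u v
    have key2 : ∀ x y : Fin (2*m),
        ((x - y).val = 1 ↔ (x.val = y.val + 1 ∨ (x.val = 0 ∧ y.val = 2*m-1))) := by
      intro x y
      rw [Fin.sub_def]
      simp only
      have hx := x.isLt
      have hy := y.isLt
      rcases Nat.lt_or_ge (2*m - y.val + x.val) (2*m) with h | h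
      · rw [Nat.mod_eq_of_lt h]; omega
      · rw [Nat.mod_eq_sub_mod h, Nat.mod_eq_of_lt (by omega)]; omega
    rw [cycleGraph_adj', key2, key2]
    omega
  have hv := v.isLt
  have hw1v : (v.val + 1) % (2*m) = if v.val = 2*m-1 then 0 else v.val + 1 := by
    split_ifs with h
    · rw [h]
      have e : 2*m-1+1 = 2*m := by omega
      rw [e, Nat.mod_self]
    · exact Nat.mod_eq_of_lt (by omega)
  have hw2v : (v.val + (2*m-1)) % (2*m) = if v.val = 0 then 2*m-1 else v.val - 1 := by
    split_ifs with h
    · rw [h, Nat.zero_add]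
      exact Nat.mod_eq_of_lt (by omega)
    · rw [Nat.mod_eq_sub_mod (by omega), Nat.mod_eq_of_lt (by omega)]
      omega
  have hnf : (cycleGraph (2*m)).neighborFinset v =
      {⟨(v.val+1) % (2*m), Nat.mod_lt _ (by omega)⟩,
       ⟨(v.val + (2*m-1)) % (2*m), Nat.mod_lt _ (by omega)⟩} := by
    ext u
    rw [mem_neighborFinset, key]
    simp only [Finset.mem_insert, Finset.mem_singleton, Fin.ext_iff, Fin.val_mk]
    have hu := u.isLt
    rw [hw1v, hw2v]
    split_ifs <;> omega
  rw [degree, hnf, Finset.card_pair]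
  simp only [Ne, Fin.mk.injEq]
  rw [hw1v, hw2v]
  split_ifs <;> omega


noncomputable def incEquiv {V : Type*} [Fintype V] (G : SimpleGraph V) (v : V) :
    {e : G.edgeSet // v ∈ (e : Sym2 V)} ≃ G.incidenceSet v where
  toFun e := ⟨e.1.1, e.1.2, e.2⟩
  invFun e := ⟨⟨e.1, e.2.1⟩, e.2.2⟩
  left_inv e := rfl
  right_inv e := rfl

lemma gr_deg {n m : ℕ} (hm : 2 ≤ m) (v : Fin (2*n+1) × Fin (2*m)) :
    (Gr n m).degree v = 2*n+2 := by
  unfold Gr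
  rw [degree_boxProd, complete_graph_degree, cyc_deg hm]
  simp

lemma card_inc {n m : ℕ} (hm : 2 ≤ m) (v : Fin (2*n+1) × Fin (2*m)) :
    Fintype.card {e : (Gr n m).edgeSet // v ∈ (e : Sym2 (Fin (2*n+1) × Fin (2*m)))} = 2*n+2 := by
  rw [Fintype.card_congr (incEquiv (Gr n m) v), card_incidenceSet_eq_degree, gr_deg hm]

lemma lower (n m : ℕ) (hn : 2 ≤ n) (hm : 2 ≤ m) (k : ℕ)
    (hk : Nonempty (MatchingBookEmbedding (Gr n m) k)) : 2*n+3 ≤ k := by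
  obtain ⟨B⟩ := hk
  by_contra hc
  push_neg at hc
  have hinj : ∀ v : Fin (2*n+1) × Fin (2*m),
      Function.Injective
        (fun e : {e : (Gr n m).edgeSet // v ∈ (e : Sym2 (Fin (2*n+1) × Fin (2*m)))} =>
          B.page e.1) := by
    intro v e f h
    by_contra hne
    exact B.matching e.1 f.1 (fun hh => hne (Subtype.ext hh)) h v e.2 f.2
  have hkge : 2*n+2 ≤ k := by
    have h := Fintype.card_le_of_injective _ (hinj (⟨0, by omega⟩, ⟨0, by omega⟩))
    rw [card_inc hm, Fintype.card_fin] at h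
    exact h
  have hkeq : k = 2*n+2 := by omega
  have hsurj : ∀ (v : Fin (2*n+1) × Fin (2*m)) (p : Fin k),
      ∃ e : (Gr n m).edgeSet, v ∈ (e : Sym2 (Fin (2*n+1) × Fin (2*m))) ∧ B.page e = p := by
    intro v p
    have hbij : Function.Bijective
        (fun e : {e : (Gr n m).edgeSet // v ∈ (e : Sym2 (Fin (2*n+1) × Fin (2*m)))} =>
          B.page e.1) :=
      (Fintype.bijective_iff_injective_and_card _).2
        ⟨hinj v, by rw [card_inc hm, Fintype.card_fin, hkeq]⟩
    obtain ⟨e, he⟩ := hbij.2 p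
    exact ⟨e.1, e.2, he⟩
  have hpart : ∀ (p : Fin k) (t : Fin (2*n+1) × Fin (2*m)),
      ∃ w, w ≠ t ∧ ∃ g : (Gr n m).edgeSet, B.page g = p ∧
        (g : Sym2 (Fin (2*n+1) × Fin (2*m))) = s(t, w) := by
    intro p t
    obtain ⟨e, hte, hpe⟩ := hsurj t p
    obtain ⟨w, hw⟩ := Sym2.mem_iff_exists.mp hte
    have hadj : (Gr n m).Adj t w := (Gr n m).mem_edgeSet.mp (hw ▸ e.prop)
    exact ⟨w, hadj.ne.symm, e, hpe, hw⟩
  choose pt hptne pte hptpage hpts using hpart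
  have huniq : ∀ (t : Fin (2*n+1) × Fin (2*m)) (g1 g2 : (Gr n m).edgeSet),
      B.page g1 = B.page g2 → t ∈ (g1 : Sym2 _) → t ∈ (g2 : Sym2 _) → g1 = g2 := by
    intro t g1 g2 h1 ht1 ht2
    by_contra hne
    exact B.matching g1 g2 hne h1 t ht1 ht2
  have hinvol : ∀ (p : Fin k) t, pt p (pt p t) = t := by
    intro p t
    have hmem1 : (pt p t) ∈ ((pte p (pt p t)) : Sym2 _) := by
      rw [hpts p (pt p t)]
      exact Sym2.mem_mk_left _ _
    have hmem2 : (pt p t) ∈ ((pte p t) : Sym2 _) := by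
      rw [hpts p t]
      exact Sym2.mem_mk_right _ _
    have heq := huniq (pt p t) (pte p (pt p t)) (pte p t)
      ((hptpage p (pt p t)).trans (hptpage p t).symm) hmem1 hmem2
    have hss : s(pt p t, pt p (pt p t)) = s(t, pt p t) := by
      rw [← hpts p (pt p t), heq, hpts p t]
    rcases Sym2.eq_iff.mp hss with ⟨h1', h2'⟩ | ⟨h1', h2'⟩
    · exact absurd h1' (hptne p t)
    · exact h2'
  classical
  set Pv : (Fin (2*n+1) × Fin (2*m)) → ℕ := fun t => (B.ord t).val with hPv
  have hPinj : ∀ {x y}, Pv x = Pv y → x = y := fun h => B.ord.injective (Fin.ext h)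
  have claim' : ∀ (g : (Gr n m).edgeSet) u w, (g : Sym2 _) = s(u,w) → Pv u < Pv w →
      Pv u % 2 ≠ Pv w % 2 := by
    intro g u w hg hlt
    set p := B.page g with hp
    set S : Finset (Fin (2*n+1) × Fin (2*m)) :=
      Finset.univ.filter (fun t => Pv u < Pv t ∧ Pv t < Pv w) with hS
    have hmemS : ∀ t, t ∈ S ↔ (Pv u < Pv t ∧ Pv t < Pv w) := by
      intro t
      simp [hS]
    have hgmem : ∀ t ∈ S, pt p t ∈ S := by
      intro t ht
      rw [hmemS] at ht
      have hpagegt : B.page (pte p t) = B.page g := (hptpage p t).trans hp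
      have htne : pte p t ≠ g := by
        intro h
        have htm : t ∈ (g : Sym2 _) := by
          rw [← h, hpts p t]
          exact Sym2.mem_mk_left _ _
        rw [hg] at htm
        rcases Sym2.mem_iff.mp htm with rfl | rfl
        · omega
        · omega
      have hu_not : u ∉ ((pte p t) : Sym2 _) :=
        B.matching g (pte p t) (Ne.symm htne) hpagegt.symm u (by rw [hg]; exact Sym2.mem_mk_left _ _)
      have hw_not : w ∉ ((pte p t) : Sym2 _) :=
        B.matching g (pte p t) (Ne.symm htne) hpagegt.symm w (by rw [hg]; exact Sym2.mem_mk_right _ _)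
      have hptmem : pt p t ∈ ((pte p t) : Sym2 _) := by
        rw [hpts p t]
        exact Sym2.mem_mk_right _ _
      have hne_u : pt p t ≠ u := fun h => hu_not (h ▸ hptmem)
      have hne_w : pt p t ≠ w := fun h => hw_not (h ▸ hptmem)
      rw [hmemS]
      rcases lt_trichotomy (Pv (pt p t)) (Pv u) with hq | hq | hq
      · exfalso
        exact B.noncross (pte p t) g hpagegt (pt p t) t u w
          ((hpts p t).trans (Sym2.eq_swap)) hg hq ht.1 ht.2
      · exact absurd (hPinj hq) hne_u
      rcases lt_trichotomy (Pv (pt p t)) (Pv w) with hq2 | hq2 | hq2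
      · exact ⟨hq, hq2⟩
      · exact absurd (hPinj hq2) hne_w
      · exfalso
        exact B.noncross g (pte p t) hpagegt.symm u w t (pt p t) hg (hpts p t) ht.1 ht.2 hq2
    have heven := even_card_of_involution S (pt p) hgmem
      (fun t _ => hinvol p t) (fun t _ => hptne p t)
    have hcard : S.card = (Finset.Ioo (Pv u) (Pv w)).card := by
      apply Finset.card_bij (fun t _ => Pv t)
      · intro t ht
        rw [hmemS] at ht
        rw [Finset.mem_Ioo]
        exact ht
      · intro t1 h1 t2 h2 h
        exact hPinj h
      · intro x hx
        rw [Finset.mem_Ioo] at hx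
        have hxlt : x < Fintype.card (Fin (2*n+1) × Fin (2*m)) := lt_trans hx.2 (B.ord w).isLt
        refine ⟨B.ord.symm ⟨x, hxlt⟩, ?_, ?_⟩
        · rw [hmemS]
          have : Pv (B.ord.symm ⟨x, hxlt⟩) = x := by
            rw [hPv]
            simp
          rw [this]
          exact hx
        · rw [hPv]
          simp
    rw [hcard, Nat.card_Ioo] at heven
    obtain ⟨c, hcc⟩ := heven
    intro hpar
    omega
  have claim : ∀ (g : (Gr n m).edgeSet) u w, (g : Sym2 _) = s(u,w) →
      Pv u % 2 ≠ Pv w % 2 := by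
    intro g u w hg
    have hadj : (Gr n m).Adj u w := (Gr n m).mem_edgeSet.mp (hg ▸ g.prop)
    rcases lt_trichotomy (Pv u) (Pv w) with h | h | h
    · exact claim' g u w hg h
    · exact absurd (hPinj h) hadj.ne
    · exact (claim' g w u (hg.trans Sym2.eq_swap) h).symm
  -- triangle
  have hN : (5:ℕ) ≤ 2*n+1 := by omega
  set x : Fin (2*n+1) × Fin (2*m) := (⟨0, by omega⟩, ⟨0, by omega⟩) with hx
  set y : Fin (2*n+1) × Fin (2*m) := (⟨1, by omega⟩, ⟨0, by omega⟩) with hy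
  set z : Fin (2*n+1) × Fin (2*m) := (⟨2, by omega⟩, ⟨0, by omega⟩) with hz
  have hadj_xy : (Gr n m).Adj x y := by
    apply (boxProd_adj).mpr
    left
    constructor
    · rw [top_adj]
      simp [hx, hy, Fin.ext_iff]
    · rfl
  have hadj_yz : (Gr n m).Adj y z := by
    apply (boxProd_adj).mpr
    left
    constructor
    · rw [top_adj]
      simp [hy, hz, Fin.ext_iff]
    · rfl
  have hadj_xz : (Gr n m).Adj x z := by
    apply (boxProd_adj).mpr
    left
    constructor
    · rw [top_adj]
      simp [hx, hz, Fin.ext_iff]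
    · rfl
  have c1 := claim ⟨s(x,y), (Gr n m).mem_edgeSet.mpr hadj_xy⟩ x y rfl
  have c2 := claim ⟨s(y,z), (Gr n m).mem_edgeSet.mpr hadj_yz⟩ y z rfl
  have c3 := claim ⟨s(x,z), (Gr n m).mem_edgeSet.mpr hadj_xz⟩ x z rfl
  omega

end MBTAux

/-- For `n, m ≥ 2`, `mbt (K_{2n+1} □ C_{2m}) = 2n + 3 = Δ + 1`. -/
theorem stmt_11 (n m : ℕ) (hn : 2 ≤ n) (hm : 2 ≤ m) :
    mbt ((⊤ : SimpleGraph (Fin (2 * n + 1))) □ cycleGraph (2 * m)) = 2 * n + 3 ∧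
    ((⊤ : SimpleGraph (Fin (2 * n + 1))) □ cycleGraph (2 * m)).maxDegree + 1 = 2 * n + 3 := by
  constructor
  · have hmem : (2*n+3) ∈ {k | Nonempty (MatchingBookEmbedding (MBTAux.Gr n m) k)} :=
      MBTAux.construction n m hn hm
    have := MBTAux.lower n m hn hm
    unfold mbt
    have hGr : ((⊤ : SimpleGraph (Fin (2 * n + 1))) □ cycleGraph (2 * m)) = MBTAux.Gr n m := rfl
    rw [hGr]
    exact le_antisymm (Nat.sInf_le hmem) (le_csInf ⟨_, hmem⟩ (fun k hk => this k hk))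
  · have hGr : ((⊤ : SimpleGraph (Fin (2 * n + 1))) □ cycleGraph (2 * m)) = MBTAux.Gr n m := rfl
    rw [hGr]
    have hle : (MBTAux.Gr n m).maxDegree ≤ 2*n+2 :=
      SimpleGraph.maxDegree_le_of_forall_degree_le _ _
        (fun v => le_of_eq (MBTAux.gr_deg hm v))
    have hge : 2*n+2 ≤ (MBTAux.Gr n m).maxDegree := by
      have := SimpleGraph.degree_le_maxDegree (MBTAux.Gr n m) (⟨0, by omega⟩, ⟨0, by omega⟩)
      rwa [MBTAux.gr_deg hm] at this
    omega
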